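/- Let G = (V, E) be a connected regular graph of even order n, and let {V₁, V₂} be a partition of V with |V₁| = |V₂| = n/2. If the subgraphs of G induced on V₁ and on V₂ are both 1-factorable, then G is 1-factorable. -/

import Mathlib

open SimpleGraph

/-- The chromatic index (edge-chromatic number) of a graph, defined as the
chromatic number of its line graph. -/
noncomputable def edgeChromaticNumber {V : Type*} (G : SimpleGraph V) : ℕ∞ :=
  G.lineGraph.chromaticNumber

/-- A graph is 1-factorable if its edge set can be partitioned into
perfect matchings (1-factors). -/
def IsOneFactorable {V : Type*} (G : SimpleGraph V) : Prop :=
  ∃ F : Set G.Subgraph, (∀ M ∈ F, M.IsPerfectMatching) ∧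
    ∀ e ∈ G.edgeSet, ∃! M, M ∈ F ∧ e ∈ M.edgeSet

/-- A regular graph is class 1 if its chromatic index equals its degree. -/
def IsClass1 {V : Type*} (G : SimpleGraph V) : Prop :=
  ∃ k : ℕ, (∀ v, Nat.card (G.neighborSet v) = k) ∧ edgeChromaticNumber G = k

/- ### Auxiliary machinery -/

instance OneFact.subgraphFinite {V : Type*} [Finite V] (G : SimpleGraph V) :
    Finite G.Subgraph :=
  Finite.of_injective (fun H => (H.verts, H.Adj))
    (fun _ _ h => SimpleGraph.Subgraph.ext (congrArg Prod.fst h) (congrArg Prod.snd h))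

/-- In a 1-factorization, the number of factors equals every degree. -/
lemma OneFact.factor_card {W : Type*} (H : SimpleGraph W) (F : Set H.Subgraph)
    (hm : ∀ M ∈ F, M.IsPerfectMatching)
    (hu : ∀ e ∈ H.edgeSet, ∃! M, M ∈ F ∧ e ∈ M.edgeSet) (v : W) :
    Nat.card F = Nat.card (H.neighborSet v) := by
  have key : ∀ M : F, ∃ w, (M : H.Subgraph).Adj v w := by
    rintro ⟨M, hM⟩
    obtain ⟨w, hw, -⟩ := (hm M hM).1 ((hm M hM).2 v)
    exact ⟨w, hw⟩
  choose f hf using key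
  have hf' : ∀ M : F, f M ∈ H.neighborSet v := fun M => (M : H.Subgraph).adj_sub (hf M)
  refine Nat.card_eq_of_bijective (fun M => ⟨f M, hf' M⟩) ⟨?_, ?_⟩
  · rintro M M' h
    simp only [Subtype.mk.injEq] at h
    have h1 : (M : H.Subgraph).Adj v (f M) := hf M
    have h2 : (M' : H.Subgraph).Adj v (f M) := h ▸ hf M'
    obtain ⟨N, -, hNuniq⟩ := hu s(v, f M) ((M : H.Subgraph).adj_sub h1)
    have e1 := hNuniq M ⟨M.2, h1⟩
    have e2 := hNuniq M' ⟨M'.2, h2⟩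
    exact Subtype.ext (e1.trans e2.symm)
  · rintro ⟨w, hw⟩
    obtain ⟨M, ⟨hMF, hMe⟩, -⟩ := hu s(v, w) hw
    refine ⟨⟨M, hMF⟩, ?_⟩
    have hadj : M.Adj v w := hMe
    obtain ⟨w', _, huniq⟩ := (hm M hMF).1 (M.edge_vert hadj)
    have h1 : f ⟨M, hMF⟩ = w' := huniq _ (hf ⟨M, hMF⟩)
    have h2 : w = w' := huniq _ hadj
    simp [h1, h2]

/-- Hall's theorem: a regular "bipartite" graph with equal sides has a perfect matching. -/
lemma OneFact.exists_pm_bipartite_regular {V : Type*} [Fintype V] (B : SimpleGraph V)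
    [DecidableRel B.Adj] (s : Set V) [DecidablePred (· ∈ s)]
    (hbip : ∀ u w, B.Adj u w → ¬(u ∈ s ↔ w ∈ s))
    {r : ℕ} (hr : 0 < r) (hreg : ∀ v, B.degree v = r)
    (hcard : Nat.card s = Nat.card ↥(sᶜ)) :
    ∃ M : B.Subgraph, M.IsPerfectMatching := by
  classical
  have hall : ∀ (A : Finset ↥s), A.card ≤ (A.biUnion fun x => B.neighborFinset ↑x).card := by
    intro A
    set N := A.biUnion fun x => B.neighborFinset ↑x with hN
    have h1 : (A.biUnion fun x => {(x : V)} ×ˢ B.neighborFinset ↑x).card = r * A.card := by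
      rw [Finset.card_biUnion]
      · simp [Finset.card_singleton, hreg, mul_comm]
      · intro x _ y _ hxy
        simp only [Finset.disjoint_left]
        rintro ⟨a, b⟩ hab hab'
        simp only [Finset.mem_product, Finset.mem_singleton] at hab hab'
        exact hxy (Subtype.ext (hab.1.symm.trans hab'.1))
    have h2 : (N.biUnion fun w => {w} ×ˢ B.neighborFinset w).card = r * N.card := by
      rw [Finset.card_biUnion]
      · simp [hreg, mul_comm]
      · intro x _ y _ hxy
        simp only [Finset.disjoint_left]
        rintro ⟨a, b⟩ hab hab'
        simp only [Finset.mem_product, Finset.mem_singleton] at hab hab'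
        exact hxy (hab.1.symm.trans hab'.1)
    have hinj : ((A.biUnion fun x => {(x : V)} ×ˢ B.neighborFinset ↑x).image Prod.swap) ⊆
        N.biUnion fun w => {w} ×ˢ B.neighborFinset w := by
      intro p hp
      simp only [Finset.mem_image, Finset.mem_biUnion, Finset.mem_product,
        Finset.mem_singleton] at hp
      obtain ⟨⟨a, b⟩, ⟨x, hx, ha, hb⟩, rfl⟩ := hp
      subst ha
      rw [SimpleGraph.mem_neighborFinset] at hb
      refine Finset.mem_biUnion.mpr ⟨b, Finset.mem_biUnion.mpr ⟨x, hx,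
        by rw [SimpleGraph.mem_neighborFinset]; exact hb⟩, Finset.mem_product.mpr
        ⟨Finset.mem_singleton_self b, by rw [SimpleGraph.mem_neighborFinset]; exact hb.symm⟩⟩
    have hcard2 : (A.biUnion fun x => {(x : V)} ×ˢ B.neighborFinset ↑x).card ≤
        (N.biUnion fun w => {w} ×ˢ B.neighborFinset w).card := by
      calc (A.biUnion fun x => {(x : V)} ×ˢ B.neighborFinset ↑x).card
          = ((A.biUnion fun x => {(x : V)} ×ˢ B.neighborFinset ↑x).image Prod.swap).card :=
            (Finset.card_image_of_injective _ Prod.swap_injective).symm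
        _ ≤ _ := Finset.card_le_card hinj
    rw [h1, h2] at hcard2
    exact Nat.le_of_mul_le_mul_left hcard2 hr
  obtain ⟨f, hfinj, hf⟩ := (Finset.all_card_le_biUnion_card_iff_exists_injective _).mp hall
  have hfmem : ∀ x : ↥s, f x ∈ sᶜ := by
    intro x
    have hmem := hf x
    rw [SimpleGraph.mem_neighborFinset] at hmem
    have hx := hbip _ _ hmem
    simp only [Set.mem_compl_iff]
    intro hfs
    exact hx ⟨fun _ => hfs, fun _ => x.2⟩
  let f' : ↥s → ↥(sᶜ) := fun x => ⟨f x, hfmem x⟩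
  have hf'inj : Function.Injective f' := fun x y h => hfinj (congrArg Subtype.val h)
  have hbij : Function.Bijective f' := by
    rw [Fintype.bijective_iff_injective_and_card]
    refine ⟨hf'inj, ?_⟩
    rwa [← Nat.card_eq_fintype_card, ← Nat.card_eq_fintype_card]
  obtain ⟨M, hMverts, hMmatch⟩ := Subgraph.IsMatching.exists_of_disjoint_sets_of_equiv
    (disjoint_compl_right (a := s)) (Equiv.ofBijective f' hbij)
    (fun x => by
      have hmem := hf x
      rw [SimpleGraph.mem_neighborFinset] at hmem
      exact hmem)
  refine ⟨M, hMmatch, fun v => ?_⟩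
  rw [hMverts, Set.union_compl_self]
  trivial

section MapOfLE
variable {V : Type*} {B B' : SimpleGraph V}

lemma OneFact.map_ofLE_edgeSet (h : B' ≤ B) (M : B'.Subgraph) :
    (M.map (SimpleGraph.Hom.ofLE h)).edgeSet = M.edgeSet := by
  ext e
  refine Sym2.ind (fun u w => ?_) e
  simp only [Subgraph.mem_edgeSet, Subgraph.map_adj, Relation.Map, Hom.coe_ofLE, id_eq]
  constructor
  · rintro ⟨a, b, hab, rfl, rfl⟩; exact hab
  · intro hab; exact ⟨u, w, hab, rfl, rfl⟩

lemma OneFact.map_ofLE_isPerfectMatching (h : B' ≤ B) {M : B'.Subgraph}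
    (hM : M.IsPerfectMatching) : (M.map (SimpleGraph.Hom.ofLE h)).IsPerfectMatching := by
  refine ⟨hM.1.map_ofLE h, fun v => ?_⟩
  simp only [Subgraph.map_verts, Hom.coe_ofLE, Set.image_id]
  exact hM.2 v

end MapOfLE

/-- A regular "bipartite" graph with equal sides decomposes into perfect matchings. -/
lemma OneFact.bipartite_factorization {V : Type*} [Fintype V] (s : Set V)
    [DecidablePred (· ∈ s)]
    (hcard : Nat.card s = Nat.card ↥(sᶜ)) (r : ℕ) :
    ∀ (B : SimpleGraph V),
      (∀ u w, B.Adj u w → ¬(u ∈ s ↔ w ∈ s)) → (∀ v, (B.neighborSet v).ncard = r) →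
      ∃ f : Fin r → B.Subgraph, (∀ i, (f i).IsPerfectMatching) ∧
        (∀ e ∈ B.edgeSet, ∃ i, e ∈ (f i).edgeSet) ∧
        (∀ i j e, e ∈ (f i).edgeSet → e ∈ (f j).edgeSet → i = j) := by
  classical
  induction r with
  | zero =>
    intro B hbip hreg
    refine ⟨Fin.elim0, fun i => i.elim0, fun e he => ?_, fun i => i.elim0⟩
    exfalso
    refine Sym2.ind (fun u w he => ?_) e he
    rw [mem_edgeSet] at he
    have hmem : w ∈ B.neighborSet u := he
    have h0 := hreg u
    rw [Set.ncard_eq_zero (Set.toFinite _)] at h0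
    simp [h0] at hmem
  | succ r ih =>
    intro B hbip hreg
    letI : DecidableRel B.Adj := Classical.decRel _
    have hdeg : ∀ v, B.degree v = r + 1 := by
      intro v
      rw [← card_neighborSet_eq_degree, ← Nat.card_eq_fintype_card,
        Nat.card_coe_set_eq, hreg]
    obtain ⟨M, hM⟩ := OneFact.exists_pm_bipartite_regular B s hbip (Nat.succ_pos r) hdeg hcard
    set B' : SimpleGraph V := B \ M.spanningCoe with hB'
    have hB'le : B' ≤ B := sdiff_le
    have hB'adj : ∀ u w, B'.Adj u w ↔ B.Adj u w ∧ ¬ M.Adj u w := by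
      intro u w; rw [hB', sdiff_adj, Subgraph.spanningCoe_adj]
    have hB'bip : ∀ u w, B'.Adj u w → ¬(u ∈ s ↔ w ∈ s) :=
      fun u w h => hbip u w (hB'le h)
    have hB'reg : ∀ v, (B'.neighborSet v).ncard = r := by
      intro v
      obtain ⟨w₀, hw₀, hw₀u⟩ := hM.1 (hM.2 v)
      have hset : B'.neighborSet v = B.neighborSet v \ {w₀} := by
        ext w
        simp only [mem_neighborSet, hB'adj, Set.mem_diff, Set.mem_singleton_iff]
        constructor
        · rintro ⟨h1, h2⟩
          exact ⟨h1, fun hw => h2 (hw ▸ hw₀)⟩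
        · rintro ⟨h1, h2⟩
          exact ⟨h1, fun hM' => h2 (hw₀u w hM')⟩
      rw [hset, Set.ncard_diff_singleton_of_mem (s := B.neighborSet v)
        (M.adj_sub hw₀), hreg]
      rfl
    obtain ⟨g, hg1, hg2, hg3⟩ := ih B' hB'bip hB'reg
    refine ⟨Fin.cons M (fun i => (g i).map (SimpleGraph.Hom.ofLE hB'le)), ?_, ?_, ?_⟩
    · refine Fin.cases ?_ ?_
      · exact hM
      · exact fun i => OneFact.map_ofLE_isPerfectMatching hB'le (hg1 i)
    · intro e he
      refine Sym2.ind (fun u w he => ?_) e he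
      rw [mem_edgeSet] at he
      by_cases hMe : M.Adj u w
      · exact ⟨0, hMe⟩
      · have hadj : B'.Adj u w := (hB'adj u w).mpr ⟨he, hMe⟩
        obtain ⟨i, hi⟩ := hg2 s(u, w) hadj
        refine ⟨i.succ, ?_⟩
        rw [Fin.cons_succ, OneFact.map_ofLE_edgeSet]
        exact hi
    · intro i j e
      refine Fin.cases ?_ ?_ i <;> [skip; intro i'] <;> refine Fin.cases ?_ ?_ j
      · intros; rfl
      · intro j' h1 h2
        exfalso
        rw [Fin.cons_succ, OneFact.map_ofLE_edgeSet] at h2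
        have h2' := (g j').edgeSet_subset h2
        rw [Fin.cons_zero] at h1
        refine Sym2.ind (fun u w h1 h2' => ?_) e h1 h2'
        rw [Subgraph.mem_edgeSet] at h1
        rw [mem_edgeSet, hB'adj] at h2'
        exact h2'.2 h1
      · intro h1 h2
        exfalso
        rw [Fin.cons_succ, OneFact.map_ofLE_edgeSet] at h1
        have h1' := (g i').edgeSet_subset h1
        rw [Fin.cons_zero] at h2
        refine Sym2.ind (fun u w h2 h1' => ?_) e h2 h1'
        rw [Subgraph.mem_edgeSet] at h2
        rw [mem_edgeSet, hB'adj] at h1'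
        exact h1'.2 h2
      · intro j' h1 h2
        rw [Fin.cons_succ, OneFact.map_ofLE_edgeSet] at h1 h2
        exact congrArg Fin.succ (hg3 i' j' e h1 h2)

/-- Degree sum over one side of a bipartite-type graph equals the number of edges. -/
lemma OneFact.side_count {V : Type*} [Fintype V] [DecidableEq V] (B : SimpleGraph V)
    [DecidableRel B.Adj] (s : Set V) [DecidablePred (· ∈ s)]
    (hbip : ∀ u w, B.Adj u w → ¬(u ∈ s ↔ w ∈ s)) :
    ∑ v ∈ s.toFinset, B.degree v = B.edgeFinset.card := by
  classical
  set D : Finset B.Dart := Finset.univ.filter (fun d => d.fst ∈ s) with hD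
  have h1 : D.card = ∑ v ∈ s.toFinset, B.degree v := by
    rw [Finset.card_eq_sum_card_fiberwise (f := fun d : B.Dart => d.fst) (t := s.toFinset)
      (fun d hd => by simp only [hD, Finset.mem_coe, Finset.mem_filter] at hd; simp [hd.2])]
    refine Finset.sum_congr rfl fun v hv => ?_
    rw [Set.mem_toFinset] at hv
    have heq : D.filter (fun d => d.fst = v) = Finset.univ.filter (fun d : B.Dart => d.fst = v) := by
      ext d
      simp only [hD, Finset.mem_filter, Finset.mem_univ, true_and]
      exact ⟨fun h => h.2, fun h => ⟨h ▸ hv, h⟩⟩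
    rw [heq, dart_fst_fiber_card_eq_degree]
  have h2 : D.card = B.edgeFinset.card := by
    refine Finset.card_bij (fun d _ => d.edge) ?_ ?_ ?_
    · intro d _
      rw [mem_edgeFinset]
      exact d.edge_mem
    · intro d₁ h₁ d₂ h₂ he
      rw [hD, Finset.mem_filter] at h₁ h₂
      rcases dart_edge_eq_iff d₁ d₂ |>.mp he with h | h
      · exact h
      · exfalso
        have hadj := d₂.adj
        have hx := hbip _ _ hadj
        have hfst : d₁.fst = d₂.snd := by rw [h]; rfl
        exact hx ⟨fun _ => hfst ▸ h₁.2, fun _ => h₂.2⟩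
    · intro e he
      rw [mem_edgeFinset] at he
      revert he
      refine Sym2.ind (fun u w he => ?_) e
      rw [mem_edgeSet] at he
      have hx := hbip _ _ he
      by_cases hu : u ∈ s
      · exact ⟨⟨(u, w), he⟩, by simp [hD, hu], rfl⟩
      · have hw : w ∈ s := by
          by_contra hw
          exact hx ⟨fun h => absurd h hu, fun h => absurd h hw⟩
        exact ⟨⟨(w, u), he.symm⟩, by simp [hD, hw], Sym2.eq_swap⟩
  omega

/-- Lift of a subgraph of an induced subgraph back to the ambient graph. -/
def OneFact.lift {V : Type*} {G : SimpleGraph V} {s : Set V}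
    (M : (G.induce s).Subgraph) : G.Subgraph where
  verts := Subtype.val '' M.verts
  Adj u w := ∃ (hu : u ∈ s) (hw : w ∈ s), M.Adj ⟨u, hu⟩ ⟨w, hw⟩
  adj_sub := by rintro u w ⟨hu, hw, h⟩; exact M.adj_sub h
  edge_vert := by rintro u w ⟨hu, hw, h⟩; exact ⟨⟨u, hu⟩, M.edge_vert h, rfl⟩
  symm := ⟨fun u w ⟨hu, hw, h⟩ => ⟨hw, hu, h.symm⟩⟩

namespace OneFact
variable {V : Type*} {G : SimpleGraph V} {s : Set V} {M : (G.induce s).Subgraph}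

lemma lift_verts (hM : M.IsSpanning) : (lift M).verts = s := by
  have : M.verts = Set.univ := Set.eq_univ_of_forall hM
  show Subtype.val '' M.verts = s
  rw [this, Subtype.coe_image_univ]

lemma lift_isMatching (hM : M.IsMatching) : (lift M).IsMatching := by
  rintro v ⟨⟨v', hv'⟩, hvM, rfl⟩
  obtain ⟨w, hw, hwu⟩ := hM hvM
  refine ⟨↑w, ⟨hv', w.2, ?_⟩, ?_⟩
  · convert hw
  · rintro y ⟨hy1, hy2, hy⟩
    have := hwu ⟨y, hy2⟩ hy
    exact congrArg Subtype.val this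

lemma lift_adj {u w : V} :
    (lift M).Adj u w ↔ ∃ (hu : u ∈ s) (hw : w ∈ s), M.Adj ⟨u, hu⟩ ⟨w, hw⟩ := Iff.rfl

end OneFact

/-- Lemma 2.2(i): if a connected regular graph `G` of even order `n` has a partition of its
vertex set into two halves `V₁, V₂` of size `n/2` such that the induced subgraphs on `V₁` and
`V₂` are both 1-factorable, then `G` is 1-factorable. -/
theorem stmt_2 {V : Type*} [Fintype V] (G : SimpleGraph V) [DecidableRel G.Adj] (k : ℕ)
    (hconn : G.Connected) (hreg : G.IsRegularOfDegree k)
    (heven : Even (Fintype.card V)) (V₁ : Set V)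
    (hcard1 : Nat.card V₁ = Fintype.card V / 2)
    (hcard2 : Nat.card ↥(V₁ᶜ) = Fintype.card V / 2)
    (hf1 : IsOneFactorable (G.induce V₁))
    (hf2 : IsOneFactorable (G.induce V₁ᶜ)) :
    IsOneFactorable G := by
  classical
  obtain ⟨F₁, hF₁m, hF₁u⟩ := hf1
  obtain ⟨F₂, hF₂m, hF₂u⟩ := hf2
  by_cases hE : IsEmpty V
  · refine ⟨∅, by simp, fun e he => ?_⟩
    exact absurd he (by refine Sym2.ind (fun u w => ?_) e; exact fun h => hE.elim u)
  rw [not_isEmpty_iff] at hE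
  have hVpos : 0 < Fintype.card V := Fintype.card_pos
  have hhalf : 0 < Fintype.card V / 2 := by
    obtain ⟨m, hm⟩ := heven; omega
  have hV₁ne : Nonempty ↥V₁ := (Nat.card_pos_iff.mp (hcard1 ▸ hhalf)).1
  set d₁ := Nat.card F₁ with hd₁
  set d₂ := Nat.card F₂ with hd₂
  -- inner degrees
  have hgen : ∀ (s : Set V) (Fs : Set (G.induce s).Subgraph),
      (∀ M ∈ Fs, M.IsPerfectMatching) →
      (∀ e ∈ (G.induce s).edgeSet, ∃! M, M ∈ Fs ∧ e ∈ M.edgeSet) →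
      ∀ (v : V) (hv : v ∈ s), {w | w ∈ s ∧ G.Adj v w}.ncard = Nat.card Fs := by
    intro s Fs hm hu v hv
    rw [OneFact.factor_card (G.induce s) Fs hm hu ⟨v, hv⟩]
    have hset : Subtype.val '' ((G.induce s).neighborSet ⟨v, hv⟩) = {w | w ∈ s ∧ G.Adj v w} := by
      ext w
      simp only [Set.mem_image, mem_neighborSet, comap_adj, Function.Embedding.coe_subtype,
        Set.mem_setOf_eq]
      constructor
      · rintro ⟨⟨y, hy⟩, hadj, rfl⟩; exact ⟨hy, hadj⟩
      · rintro ⟨hw, hadj⟩; exact ⟨⟨w, hw⟩, hadj, rfl⟩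
    rw [Nat.card_coe_set_eq, ← hset,
      Set.ncard_image_of_injective _ Subtype.val_injective]
  have hin1 : ∀ (v : V), v ∈ V₁ → {w | w ∈ V₁ ∧ G.Adj v w}.ncard = d₁ :=
    fun v hv => hgen V₁ F₁ hF₁m hF₁u v hv
  have hin2 : ∀ (v : V), v ∉ V₁ → {w | w ∉ V₁ ∧ G.Adj v w}.ncard = d₂ := by
    intro v hv
    have := hgen V₁ᶜ F₂ hF₂m hF₂u v hv
    simpa only [Set.mem_compl_iff] using this
  -- the crossing graph
  set B : SimpleGraph V := {
    Adj := fun u w => G.Adj u w ∧ ¬(u ∈ V₁ ↔ w ∈ V₁)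
    symm := ⟨fun u w h => ⟨h.1.symm, fun hiff => h.2 hiff.symm⟩⟩
    loopless := ⟨fun v h => G.loopless.irrefl v h.1⟩ } with hB
  have hBadj : ∀ u w, B.Adj u w ↔ G.Adj u w ∧ ¬(u ∈ V₁ ↔ w ∈ V₁) := fun u w => Iff.rfl
  have hbipB : ∀ u w, B.Adj u w → ¬(u ∈ V₁ ↔ w ∈ V₁) := fun u w h => h.2
  have hBG : B ≤ G := fun u w h => h.1
  -- splitting the degree
  have hsplit : ∀ v : V, {w | w ∈ V₁ ∧ G.Adj v w}.ncard + {w | w ∉ V₁ ∧ G.Adj v w}.ncard = k := by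
    intro v
    have hunion : G.neighborSet v = {w | w ∈ V₁ ∧ G.Adj v w} ∪ {w | w ∉ V₁ ∧ G.Adj v w} := by
      ext w
      simp only [mem_neighborSet, Set.mem_union, Set.mem_setOf_eq]
      tauto
    have hdisj : Disjoint {w | w ∈ V₁ ∧ G.Adj v w} {w | w ∉ V₁ ∧ G.Adj v w} := by
      rw [Set.disjoint_left]
      rintro w ⟨h1, -⟩ ⟨h2, -⟩
      exact h2 h1
    have hdeg : (G.neighborSet v).ncard = k := by
      rw [← Nat.card_coe_set_eq, Nat.card_eq_fintype_card, card_neighborSet_eq_degree]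
      exact hreg v
    rw [← hdeg, hunion, Set.ncard_union_eq hdisj (Set.toFinite _) (Set.toFinite _)]
  -- B neighbor sets
  have hBn1 : ∀ v ∈ V₁, B.neighborSet v = {w | w ∉ V₁ ∧ G.Adj v w} := by
    intro v hv
    ext w
    simp only [mem_neighborSet, hBadj, Set.mem_setOf_eq]
    constructor
    · rintro ⟨h1, h2⟩
      exact ⟨fun hw => h2 ⟨fun _ => hw, fun _ => hv⟩, h1⟩
    · rintro ⟨h1, h2⟩
      exact ⟨h2, fun hiff => h1 (hiff.mp hv)⟩
  have hBn2 : ∀ (v : V), v ∉ V₁ → B.neighborSet v = {w | w ∈ V₁ ∧ G.Adj v w} := by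
    intro v hv
    ext w
    simp only [mem_neighborSet, hBadj, Set.mem_setOf_eq]
    constructor
    · rintro ⟨h1, h2⟩
      refine ⟨?_, h1⟩
      by_contra hw
      exact h2 ⟨fun h => absurd h hv, fun h => absurd h hw⟩
    · rintro ⟨h1, h2⟩
      exact ⟨h2, fun hiff => hv (hiff.mpr h1)⟩
  have hBdeg1 : ∀ v ∈ V₁, (B.neighborSet v).ncard = k - d₁ ∧ d₁ ≤ k := by
    intro v hv
    have := hsplit v
    rw [hin1 v hv] at this
    rw [hBn1 v hv]
    omega
  have hBdeg2 : ∀ (v : V), v ∉ V₁ → (B.neighborSet v).ncard = k - d₂ ∧ d₂ ≤ k := by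
    intro v hv
    have := hsplit v
    rw [hin2 v hv] at this
    rw [hBn2 v hv]
    omega
  -- counting argument: d₁ = d₂
  letI : DecidableRel B.Adj := Classical.decRel _
  have hdegncard : ∀ v : V, B.degree v = (B.neighborSet v).ncard := by
    intro v
    rw [← card_neighborSet_eq_degree, ← Nat.card_eq_fintype_card, Nat.card_coe_set_eq]
  have hbipBc : ∀ u w, B.Adj u w → ¬(u ∈ V₁ᶜ ↔ w ∈ V₁ᶜ) := by
    intro u w h hiff
    simp only [Set.mem_compl_iff] at hiff
    exact h.2 ⟨fun hu => by_contra fun hw => (hiff.mpr hw) hu,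
      fun hw => by_contra fun hu => (hiff.mp hu) hw⟩
  have hsum1 := OneFact.side_count B V₁ hbipB
  have hsum2 := OneFact.side_count B V₁ᶜ hbipBc
  have hsum1' : ∑ v ∈ V₁.toFinset, B.degree v = (k - d₁) * (Fintype.card V / 2) := by
    rw [Finset.sum_congr rfl (fun v hv => by
      rw [hdegncard, (hBdeg1 v (Set.mem_toFinset.mp hv)).1]), Finset.sum_const, smul_eq_mul,
      mul_comm]
    congr 1
    rw [← Set.ncard_eq_toFinset_card', ← Nat.card_coe_set_eq, hcard1]
  have hsum2' : ∑ v ∈ (V₁ᶜ).toFinset, B.degree v = (k - d₂) * (Fintype.card V / 2) := by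
    rw [Finset.sum_congr rfl (fun v hv => by
      rw [hdegncard, (hBdeg2 v (Set.mem_toFinset.mp hv)).1]), Finset.sum_const, smul_eq_mul,
      mul_comm]
    congr 1
    rw [← Set.ncard_eq_toFinset_card', ← Nat.card_coe_set_eq, hcard2]
  have hkd : k - d₁ = k - d₂ := by
    have h := hsum1'.symm.trans (hsum1.trans (hsum2.symm.trans hsum2'))
    exact Nat.eq_of_mul_eq_mul_right hhalf h
  obtain ⟨v₀, hv₀⟩ := hV₁ne
  have hd1k : d₁ ≤ k := (hBdeg1 v₀ hv₀).2
  have hd2k : d₂ ≤ k := by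
    obtain ⟨w₀, hw₀⟩ := (Nat.card_pos_iff.mp (hcard2 ▸ hhalf)).1
    exact (hBdeg2 w₀ hw₀).2
  have hd12 : d₁ = d₂ := by omega
  -- factorize the crossing graph
  set a := k - d₁ with ha
  have hBreg : ∀ v, (B.neighborSet v).ncard = a := by
    intro v
    by_cases hv : v ∈ V₁
    · exact (hBdeg1 v hv).1
    · rw [(hBdeg2 v hv).1, ← hkd]
  have hcc : Nat.card V₁ = Nat.card ↥(V₁ᶜ) := hcard1.trans hcard2.symm
  obtain ⟨fB, hfB1, hfB2, hfB3⟩ := OneFact.bipartite_factorization V₁ hcc a B hbipB hBreg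
  -- lift everything to subgraphs of G
  set fB' : Fin a → G.Subgraph := fun i => (fB i).map (SimpleGraph.Hom.ofLE hBG) with hfB'
  have hfB'pm : ∀ i, (fB' i).IsPerfectMatching :=
    fun i => OneFact.map_ofLE_isPerfectMatching hBG (hfB1 i)
  have hfB'e : ∀ i, (fB' i).edgeSet = (fB i).edgeSet :=
    fun i => OneFact.map_ofLE_edgeSet hBG (fB i)
  have e₁ : ↥F₁ ≃ Fin d₁ := Finite.equivFinOfCardEq rfl
  have e₂ : ↥F₂ ≃ Fin d₁ := Finite.equivFinOfCardEq hd12.symm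
  set C : Fin d₁ → G.Subgraph :=
    fun i => OneFact.lift (↑(e₁.symm i) : (G.induce V₁).Subgraph) ⊔
      OneFact.lift (↑(e₂.symm i) : (G.induce V₁ᶜ).Subgraph) with hC
  have hCpm : ∀ i, (C i).IsPerfectMatching := by
    intro i
    have hm1 := hF₁m _ (e₁.symm i).2
    have hm2 := hF₂m _ (e₂.symm i).2
    constructor
    · refine Subgraph.IsMatching.sup (OneFact.lift_isMatching hm1.1)
        (OneFact.lift_isMatching hm2.1) ?_
      refine Set.disjoint_of_subset ?_ ?_ (disjoint_compl_right (a := V₁))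
      · exact (Subgraph.support_subset_verts _).trans (OneFact.lift_verts hm1.2).le
      · exact (Subgraph.support_subset_verts _).trans (OneFact.lift_verts hm2.2).le
    · intro v
      show v ∈ (_ ⊔ _ : G.Subgraph).verts
      rw [Subgraph.verts_sup, OneFact.lift_verts hm1.2, OneFact.lift_verts hm2.2,
        Set.union_compl_self]
      trivial
  refine ⟨Set.range (Sum.elim C fB'), ?_, ?_⟩
  · rintro M ⟨x, rfl⟩
    cases x with
    | inl i => exact hCpm i
    | inr j => exact hfB'pm j
  · intro e he
    refine Sym2.ind (fun u w he => ?_) e he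
    rw [mem_edgeSet] at he
    by_cases hu : u ∈ V₁ <;> by_cases hw : w ∈ V₁
    · -- edge inside V₁
      have hadj' : (G.induce V₁).Adj ⟨u, hu⟩ ⟨w, hw⟩ := he
      obtain ⟨M₁, ⟨hM₁F, hM₁e⟩, hM₁u⟩ := hF₁u s(⟨u, hu⟩, ⟨w, hw⟩) hadj'
      refine ⟨C (e₁ ⟨M₁, hM₁F⟩), ⟨⟨Sum.inl _, rfl⟩, ?_⟩, ?_⟩
      · simp only [hC, Subgraph.edgeSet_sup]
        left
        rw [Subgraph.mem_edgeSet]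
        refine ⟨hu, hw, ?_⟩
        rw [Equiv.symm_apply_apply]
        exact hM₁e
      · rintro M' ⟨⟨x, rfl⟩, hM'e⟩
        cases x with
        | inl i =>
          simp only [hC, Subgraph.edgeSet_sup] at hM'e
          rcases hM'e with hM'e | hM'e
          · obtain ⟨hu', hw', hadj''⟩ := hM'e
            have hieq : e₁.symm i = (⟨M₁, hM₁F⟩ : ↥F₁) :=
              Subtype.ext (hM₁u _ ⟨(e₁.symm i).2, hadj''⟩)
            have hii : i = e₁ ⟨M₁, hM₁F⟩ := by
              rw [← hieq, Equiv.apply_symm_apply]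
            rw [hii]
            rfl
          · exfalso
            obtain ⟨hu', -, -⟩ := hM'e
            exact hu' hu
        | inr j =>
          exfalso
          have hBE := (fB j).edgeSet_subset (by rw [← hfB'e j]; exact hM'e)
          rw [mem_edgeSet, hBadj] at hBE
          exact hBE.2 ⟨fun _ => hw, fun _ => hu⟩
    · -- crossing edge, u ∈ V₁, w ∉ V₁
      have hBe : B.Adj u w := ⟨he, fun hiff => hw (hiff.mp hu)⟩
      obtain ⟨j, hj⟩ := hfB2 s(u, w) hBe
      refine ⟨fB' j, ⟨⟨Sum.inr j, rfl⟩, by rw [hfB'e j]; exact hj⟩, ?_⟩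
      rintro M' ⟨⟨x, rfl⟩, hM'e⟩
      cases x with
      | inl i =>
        exfalso
        simp only [hC, Subgraph.edgeSet_sup] at hM'e
        rcases hM'e with ⟨-, hw', -⟩ | ⟨hu', -, -⟩
        · exact hw hw'
        · exact hu' hu
      | inr j' =>
        simp only [Sum.elim_inr] at hM'e ⊢
        rw [hfB'e j'] at hM'e
        exact congrArg fB' (hfB3 j' j s(u, w) hM'e hj)
    · -- crossing edge, u ∉ V₁, w ∈ V₁
      have hBe : B.Adj u w := ⟨he, fun hiff => hu (hiff.mpr hw)⟩
      obtain ⟨j, hj⟩ := hfB2 s(u, w) hBe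
      refine ⟨fB' j, ⟨⟨Sum.inr j, rfl⟩, by rw [hfB'e j]; exact hj⟩, ?_⟩
      rintro M' ⟨⟨x, rfl⟩, hM'e⟩
      cases x with
      | inl i =>
        exfalso
        simp only [hC, Subgraph.edgeSet_sup] at hM'e
        rcases hM'e with ⟨hu', -, -⟩ | ⟨-, hw', -⟩
        · exact hu hu'
        · exact hw' hw
      | inr j' =>
        simp only [Sum.elim_inr] at hM'e ⊢
        rw [hfB'e j'] at hM'e
        exact congrArg fB' (hfB3 j' j s(u, w) hM'e hj)
    · -- edge inside V₁ᶜ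
      have hu' : u ∈ V₁ᶜ := hu
      have hw' : w ∈ V₁ᶜ := hw
      have hadj' : (G.induce V₁ᶜ).Adj ⟨u, hu'⟩ ⟨w, hw'⟩ := he
      obtain ⟨M₂, ⟨hM₂F, hM₂e⟩, hM₂u⟩ := hF₂u s(⟨u, hu'⟩, ⟨w, hw'⟩) hadj'
      refine ⟨C (e₂ ⟨M₂, hM₂F⟩), ⟨⟨Sum.inl _, rfl⟩, ?_⟩, ?_⟩
      · simp only [hC, Subgraph.edgeSet_sup]
        right
        rw [Subgraph.mem_edgeSet]
        refine ⟨hu', hw', ?_⟩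
        rw [Equiv.symm_apply_apply]
        exact hM₂e
      · rintro M' ⟨⟨x, rfl⟩, hM'e⟩
        cases x with
        | inl i =>
          simp only [hC, Subgraph.edgeSet_sup] at hM'e
          rcases hM'e with hM'e | hM'e
          · exfalso
            obtain ⟨hu'', -, -⟩ := hM'e
            exact hu hu''
          · obtain ⟨hu'', hw'', hadj''⟩ := hM'e
            have hieq : e₂.symm i = (⟨M₂, hM₂F⟩ : ↥F₂) :=
              Subtype.ext (hM₂u _ ⟨(e₂.symm i).2, hadj''⟩)
            have hii : i = e₂ ⟨M₂, hM₂F⟩ := by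
              rw [← hieq, Equiv.apply_symm_apply]
            rw [hii]
            rfl
        | inr j =>
          exfalso
          have hBE := (fB j).edgeSet_subset (by rw [← hfB'e j]; exact hM'e)
          rw [mem_edgeSet, hBadj] at hBE
          exact hBE.2 ⟨fun h => absurd h hu, fun h => absurd h hw⟩
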